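/- Consider the one-dimensional piecewise-linear ODE θ'(t) = h⁺θ(t) + r if θ(t) ≥ 0, and θ'(t) = h⁻θ(t) + r if θ(t) < 0, with r > 0. Then this ODE is globally asymptotically stable with unique equilibrium θ* = −r/h⁺ > 0 if and only if h⁺ < 0 and h⁻ ≤ 0. -/

import Mathlib

theorem stmt_17 (hp hm r : ℝ) (hr : 0 < r)
    (f : ℝ → ℝ) (hf : ∀ x : ℝ, f x = if 0 ≤ x then hp * x + r else hm * x + r) :
    (0 < -r / hp ∧ (∀ x : ℝ, f x = 0 ↔ x = -r / hp) ∧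
      (∀ θ : ℝ → ℝ, (∀ t : ℝ, HasDerivAt θ (f (θ t)) t) →
        Filter.Tendsto θ Filter.atTop (nhds (-r / hp))))
    ↔ (hp < 0 ∧ hm ≤ 0) := by
  constructor
  · rintro ⟨h1, h2, -⟩
    have hp0 : hp < 0 := by
      by_contra h
      push_neg at h
      rcases h.eq_or_lt with h | h
      · rw [← h] at h1; simp at h1
      · have : -r / hp < 0 := div_neg_of_neg_of_pos (by linarith) h
        linarith
    refine ⟨hp0, ?_⟩
    by_contra h
    push_neg at h
    have hx : (-r / hm) < 0 := div_neg_of_neg_of_pos (by linarith) h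
    have : f (-r / hm) = 0 := by
      rw [hf, if_neg (by linarith)]
      field_simp
      ring
    rw [h2] at this
    linarith [this ▸ h1]
  · rintro ⟨hp0, hm0⟩
    have hpne : hp ≠ 0 := ne_of_lt hp0
    set s : ℝ := -r / hp with hs_def
    have hs : 0 < s := by
      rw [hs_def]
      exact div_pos_of_neg_of_neg (by linarith) hp0
    have hps : hp * s + r = 0 := by
      rw [hs_def]; field_simp; ring
    -- pointwise facts
    have hfpos : ∀ x : ℝ, 0 ≤ x → f x = hp * (x - s) := by
      intro x hx
      rw [hf, if_pos hx]; nlinarith [hps]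
    have hfneg : ∀ x : ℝ, x < 0 → r ≤ f x := by
      intro x hx
      rw [hf, if_neg (not_le.mpr hx)]
      nlinarith [mul_nonneg (neg_nonneg.mpr hm0) (neg_nonneg.mpr hx.le)]
    have hsign : ∀ x : ℝ, (x - s) * f x ≤ 0 := by
      intro x
      rcases le_or_gt 0 x with hx | hx
      · rw [hfpos x hx]; nlinarith [sq_nonneg (x - s)]
      · have h1 := hfneg x hx
        have h2 : x - s < 0 := by linarith
        nlinarith
    refine ⟨hs, ?_, ?_⟩
    · intro x
      constructor
      · intro hx0
        rcases le_or_gt 0 x with hx | hx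
        · have := hfpos x hx
          rw [hx0] at this
          have : x - s = 0 := by
            rcases mul_eq_zero.mp this.symm with h | h
            · exact absurd h hpne
            · exact h
          linarith
        · linarith [hfneg x hx, hx0 ▸ hr]
      · intro hx
        rw [hfpos x (by rw [hx]; linarith)]
        rw [hx]; ring
    · intro θ hθ
      set g : ℝ → ℝ := fun t => θ t - s with hg_def
      have hg : ∀ t, HasDerivAt g (f (θ t)) t := fun t => (hθ t).sub_const s
      set V : ℝ → ℝ := fun t => (g t) ^ 2 with hV_def
      have hV : ∀ t, HasDerivAt V (2 * g t * f (θ t)) t := by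
        intro t
        have := (hg t).fun_pow 2
        refine this.congr_deriv ?_
        push_cast
        ring
      have hVd : Differentiable ℝ V := fun t => (hV t).differentiableAt
      have hVanti : Antitone V := by
        apply antitone_of_deriv_nonpos hVd
        intro t
        rw [(hV t).deriv]
        show 2 * (θ t - s) * f (θ t) ≤ 0
        have := hsign (θ t)
        nlinarith
      set M : ℝ := |g 0| + 1 with hM_def
      have hM : 0 < M := by positivity
      set c : ℝ := min (-hp) (r / M) with hc_def
      have hc : 0 < c := lt_min (by linarith) (div_pos hr hM)
      have hcM : c * M ≤ r := by
        calc c * M ≤ (r / M) * M := by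
              apply mul_le_mul_of_nonneg_right (min_le_right _ _) hM.le
          _ = r := by field_simp
      have hbound : ∀ t, 0 ≤ t → |g t| ≤ M := by
        intro t ht
        have h1 : V t ≤ V 0 := hVanti ht
        have h2 : (g t) ^ 2 ≤ (g 0) ^ 2 := h1
        nlinarith [abs_nonneg (g t), abs_nonneg (g 0), sq_abs (g t), sq_abs (g 0)]
      have hkey : ∀ t, 0 ≤ t → 2 * g t * f (θ t) + 2 * c * V t ≤ 0 := by
        intro t ht
        have hb := hbound t ht
        rcases le_or_gt 0 (θ t) with hx | hx
        · have := hfpos (θ t) hx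
          have hgv : g t = θ t - s := rfl
          rw [this, ← hgv]
          have hcp : c ≤ -hp := min_le_left _ _
          have : V t = (g t) ^ 2 := rfl
          rw [this]
          nlinarith [sq_nonneg (g t)]
        · have h1 := hfneg (θ t) hx
          have h2 : g t < 0 := by
            have : θ t - s < 0 := by linarith
            exact this
          have h3 : -g t ≤ M := (abs_le.mp hb).1 |> fun h => by linarith [neg_le.mp h]
          have hVt : V t = (g t) ^ 2 := rfl
          rw [hVt]
          nlinarith [mul_nonneg (sub_nonneg.mpr h1) (neg_nonneg.mpr h2.le),
            mul_nonneg (sub_nonneg.mpr h3) (mul_nonneg hc.le (neg_nonneg.mpr h2.le))]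
      set W : ℝ → ℝ := fun t => V t * Real.exp (2 * c * t) with hW_def
      have hW : ∀ t, HasDerivAt W
          ((2 * g t * f (θ t)) * Real.exp (2 * c * t)
            + V t * (Real.exp (2 * c * t) * (2 * c))) t := by
        intro t
        have he : HasDerivAt (fun t : ℝ => Real.exp (2 * c * t))
            (Real.exp (2 * c * t) * (2 * c)) t := by
          simpa using (((hasDerivAt_id t).const_mul (2 * c)).exp)
        exact (hV t).mul he
      have hWanti : AntitoneOn W (Set.Ici (0 : ℝ)) := by
        apply antitoneOn_of_deriv_nonpos (convex_Ici 0)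
        · exact fun t _ => ((hW t).differentiableAt).continuousAt.continuousWithinAt
        · exact fun t _ => ((hW t).differentiableAt).differentiableWithinAt
        · intro t ht
          rw [interior_Ici] at ht
          rw [(hW t).deriv]
          have hk := hkey t (le_of_lt ht)
          have he : 0 < Real.exp (2 * c * t) := Real.exp_pos _
          nlinarith
      have hVle : ∀ t, 0 ≤ t → V t ≤ V 0 * Real.exp (-(2 * c * t)) := by
        intro t ht
        have h1 : W t ≤ W 0 := hWanti (Set.self_mem_Ici) (Set.mem_Ici.mpr ht) ht
        have h2 : W 0 = V 0 := by simp [hW_def]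
        have h3 : W t = V t * Real.exp (2 * c * t) := rfl
        rw [h3, h2] at h1
        have he : 0 < Real.exp (2 * c * t) := Real.exp_pos _
        rw [Real.exp_neg]
        calc V t = (V t * Real.exp (2 * c * t)) * (Real.exp (2 * c * t))⁻¹ := by
              field_simp
          _ ≤ V 0 * (Real.exp (2 * c * t))⁻¹ := by
              apply mul_le_mul_of_nonneg_right h1 (by positivity)
      have hV0 : Filter.Tendsto V Filter.atTop (nhds 0) := by
        apply squeeze_zero' (Filter.Eventually.of_forall (fun t => sq_nonneg (g t)))
        · filter_upwards [Filter.eventually_ge_atTop (0 : ℝ)] with t ht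
          exact hVle t ht
        · have h1 : Filter.Tendsto (fun t : ℝ => -(2 * c * t)) Filter.atTop Filter.atBot := by
            apply Filter.tendsto_neg_atBot_iff.mpr
            exact Filter.Tendsto.const_mul_atTop (by positivity) Filter.tendsto_id
          have h2 : Filter.Tendsto (fun t : ℝ => Real.exp (-(2 * c * t)))
              Filter.atTop (nhds 0) := Real.tendsto_exp_atBot.comp h1
          simpa using h2.const_mul (V 0)
      have habs : Filter.Tendsto (fun t => |g t|) Filter.atTop (nhds 0) := by
        have h1 : Filter.Tendsto (fun t => Real.sqrt (V t)) Filter.atTop (nhds 0) := by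
          have := (Real.continuous_sqrt.tendsto 0).comp hV0
          simpa [Function.comp_def, Real.sqrt_zero] using this
        have heq : (fun t => Real.sqrt (V t)) = fun t => |g t| :=
          funext fun t => Real.sqrt_sq_eq_abs _
        rwa [heq] at h1
      have hg0 : Filter.Tendsto g Filter.atTop (nhds 0) :=
        (tendsto_zero_iff_abs_tendsto_zero g).mpr habs
      have := hg0.add_const s
      simpa [hg_def] using this
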